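/- arXiv:1010.0528 — 5 statements merged into one kernel-verified Lean document; each statement's English description precedes it below -/
import Mathlib

section
/- Let V be a complex vector space, c, h ∈ ℂ, L a Virasoro family with central charge c on V, and v a highest-weight vector of weight h. Then for all integers r ≥ 1 and s ≥ 1: (L s)^r ((L (−s))^r v) = s^r · r! · (∏_{k=1}^{r} (2h + s(k−1) + (s²−1)c/12)) • v. -/
/-- A Virasoro family with central charge `c` on the complex vector space `V`. -/
def VirasoroFamily {V : Type*} [AddCommGroup V] [Module ℂ V]
    (c : ℂ) (L : ℤ → Module.End ℂ V) : Prop :=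
  ∀ m n : ℤ,
    L m * L n - L n * L m
      = ((m : ℂ) - (n : ℂ)) • L (m + n)
        + (if m + n = 0 then c / 12 * (m : ℂ) * ((m : ℂ) ^ 2 - 1) else 0) •
            (1 : Module.End ℂ V)

/-- A highest-weight vector of weight `h`. -/
def IsHighestWeightVector {V : Type*} [AddCommGroup V] [Module ℂ V]
    (L : ℤ → Module.End ℂ V) (h : ℂ) (v : V) : Prop :=
  (∀ n : ℤ, 1 ≤ n → L n v = 0) ∧ L 0 v = h • v

/-- `(L s)^r ((L (−s))^r v) = sʳ · r! · ∏_{k=1}^{r} (2h + s(k−1) + (s²−1)c/12) • v`. -/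
theorem shapovalov_Ls_pow {V : Type*} [AddCommGroup V] [Module ℂ V]
    (c h : ℂ) (L : ℤ → Module.End ℂ V) (hL : VirasoroFamily c L)
    (v : V) (hv : IsHighestWeightVector L h v)
    (r s : ℕ) (hr : 1 ≤ r) (hs : 1 ≤ s) :
    ((L (s : ℤ)) ^ r) (((L (-(s : ℤ))) ^ r) v)
      = ((s : ℂ) ^ r * (r.factorial : ℂ) *
          ∏ k ∈ Finset.Icc 1 r,
            (2 * h + (s : ℂ) * ((k : ℂ) - 1) + ((s : ℂ) ^ 2 - 1) * c / 12)) • v := by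
  obtain ⟨hv1, hv0⟩ := hv
  have hsne : -(s : ℤ) ≠ 0 := by omega
  -- pointwise commutator [L0, L(-s)]
  have h0 : ∀ x : V, L 0 (L (-(s:ℤ)) x)
      = L (-(s:ℤ)) (L 0 x) + (s : ℂ) • (L (-(s:ℤ)) x) := by
    intro x
    have e0 := DFunLike.congr_fun (hL 0 (-(s:ℤ))) x
    simp only [LinearMap.sub_apply, Module.End.mul_apply, LinearMap.add_apply,
      LinearMap.smul_apply, Module.End.one_apply, if_neg hsne, zero_smul, add_zero,
      zero_add] at e0
    push_cast at e0
    linear_combination (norm := module) e0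
  -- pointwise commutator [L s, L(-s)]
  have hsum : (s:ℤ) + -(s:ℤ) = 0 := by ring
  have hA : ∀ x : V, L (s:ℤ) (L (-(s:ℤ)) x)
      = L (-(s:ℤ)) (L (s:ℤ) x) + (2 * (s:ℂ)) • (L 0 x)
          + (c / 12 * (s:ℂ) * ((s:ℂ)^2 - 1)) • x := by
    intro x
    have e0 := DFunLike.congr_fun (hL (s:ℤ) (-(s:ℤ))) x
    rw [hsum] at e0
    simp only [LinearMap.sub_apply, Module.End.mul_apply, LinearMap.add_apply,
      LinearMap.smul_apply, Module.End.one_apply, if_pos rfl] at e0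
    push_cast at e0
    linear_combination (norm := module) e0
  have hBpow : ∀ j : ℕ, ((L (-(s:ℤ)))^(j+1)) v = L (-(s:ℤ)) (((L (-(s:ℤ)))^j) v) := by
    intro j; rw [pow_succ', Module.End.mul_apply]
  -- action of L0 on B^j v
  have hL0 : ∀ j : ℕ, L 0 (((L (-(s:ℤ)))^j) v)
      = (h + (j:ℂ) * (s:ℂ)) • (((L (-(s:ℤ)))^j) v) := by
    intro j
    induction j with
    | zero => simpa using hv0
    | succ j ih =>
      rw [hBpow j, h0, ih, map_smul, ← hBpow j]
      match_scalars
      push_cast; ring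
  -- action of L s on B^(j+1) v
  have hAs : ∀ j : ℕ, L (s:ℤ) (((L (-(s:ℤ)))^(j+1)) v)
      = (((j:ℂ)+1) * (s:ℂ) * (2*h + (s:ℂ)*(j:ℂ) + ((s:ℂ)^2 - 1)*c/12))
          • (((L (-(s:ℤ)))^j) v) := by
    intro j
    induction j with
    | zero =>
      have hLs : L (s:ℤ) v = 0 := hv1 (s:ℤ) (by omega)
      rw [hBpow 0]
      rw [hA]
      simp only [pow_zero, Module.End.one_apply]
      rw [hLs, hv0, map_zero, zero_add]
      match_scalars
      push_cast; ring
    | succ j ih =>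
      rw [hBpow (j+1), hA, ih, hL0 (j+1), map_smul, ← hBpow j]
      match_scalars
      push_cast; ring
  -- main induction
  have key : ∀ r : ℕ, ((L (s : ℤ)) ^ r) (((L (-(s : ℤ))) ^ r) v)
      = ((s : ℂ) ^ r * (r.factorial : ℂ) *
          ∏ k ∈ Finset.Icc 1 r,
            (2 * h + (s : ℂ) * ((k : ℂ) - 1) + ((s : ℂ) ^ 2 - 1) * c / 12)) • v := by
    intro r
    induction r with
    | zero => simp
    | succ r ih =>
      rw [pow_succ, Module.End.mul_apply, hAs r, map_smul, ih, smul_smul]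
      congr 1
      rw [Finset.prod_Icc_succ_top (by omega : 1 ≤ r + 1), Nat.factorial_succ]
      push_cast; ring
  exact key r
end

section
/- Let λ = (λ₁ ≥ λ₂ ≥ … ≥ λ_k) be a partition of n ≥ 1 and let v_λ := 𝓛_{−λ₁}(𝓛_{−λ₂}(⋯(𝓛_{−λ_k}(1))⋯)) ∈ F. Then the coefficient of the monomial x_n in v_λ is a polynomial of degree exactly one in the variable A (with coefficients in ℚ[P]). -/
open MvPolynomial

/-- The coefficient ring `R = ℚ[A, P]`: variable `0` is `A` (the Heisenberg highest
weight) and variable `1` is `P` (the background charge). -/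
abbrev BosonR : Type := MvPolynomial (Fin 2) ℚ

/-- The bosonic Fock space `F = R[x₁, x₂, …]` (the variable `x_i` is indexed by `i : ℕ`;
the variable `x_0` is never used). -/
abbrev BosonF : Type := MvPolynomial ℕ BosonR

/-- The bosonized Virasoro generator `𝓛_{−m}`:
`𝓛_{−m}(f) = (1/2)·Σ_{i,j ≥ 1, i+j=m} x_i x_j f + Σ_{j ≥ 1} j·x_{m+j}·∂f/∂x_j
+ (A + (m−1)P)·x_m·f`.  The middle sum is over the (finitely many) variables of `f`,
which captures every nonzero term since `∂f/∂x_j = 0` for `j ∉ vars f`. -/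
noncomputable def bosonL (m : ℕ) (f : BosonF) : BosonF :=
  MvPolynomial.C (MvPolynomial.C (1 / 2 : ℚ)) *
      (∑ i ∈ Finset.Ioo 0 m, MvPolynomial.X i * MvPolynomial.X (m - i)) * f
    + ∑ j ∈ f.vars.filter (fun j => 1 ≤ j),
        (j : BosonF) * MvPolynomial.X (m + j) * MvPolynomial.pderiv j f
    + MvPolynomial.C (MvPolynomial.X 0 + ((m : BosonR) - 1) * MvPolynomial.X 1) *
        MvPolynomial.X m * f

lemma coeff_zero_X_mul (j : ℕ) (g : BosonF) : MvPolynomial.coeff 0 (X j * g) = 0 := by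
  rw [coeff_X_mul']; simp

lemma coeff_single_XX_mul (i j t : ℕ) (g : BosonF) :
    MvPolynomial.coeff (Finsupp.single t 1) (X i * X j * g) = 0 := by
  rw [mul_assoc, coeff_X_mul']
  split
  · rename_i h
    have hi : t = i := by
      exact (by simpa [Finsupp.mem_support_iff, Finsupp.single_apply] using h : i = t).symm
    subst hi
    simpa using coeff_zero_X_mul j g
  · rfl

lemma coeff_zero_pderiv (i : ℕ) (f : BosonF) :
    MvPolynomial.coeff 0 (pderiv i f) = MvPolynomial.coeff (Finsupp.single i 1) f := by
  induction f using MvPolynomial.induction_on' with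
  | add p q hp hq => simp [hp, hq]
  | monomial d a =>
    rw [pderiv_monomial, coeff_monomial, coeff_monomial]
    by_cases hd : d = Finsupp.single i 1
    · subst hd; simp
    · rw [if_neg hd]
      by_cases h0 : d - Finsupp.single i 1 = 0
      · have hle : d ≤ Finsupp.single i 1 := by
          rwa [tsub_eq_zero_iff_le] at h0
        rw [if_pos h0]
        have hdi : d i = 0 := by
          rcases Nat.le_one_iff_eq_zero_or_eq_one.1
            ((hle i).trans_eq (Finsupp.single_eq_same)) with h | h
          · exact h
          · exfalso; apply hd
            ext j
            by_cases hj : j = i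
            · subst hj; simp [h]
            · have := hle j
              simp only [Finsupp.single_apply, if_neg (Ne.symm hj)] at this ⊢
              omega
        simp [hdi]
      · rw [if_neg h0]

lemma coeff_zero_bosonL (m : ℕ) (f : BosonF) :
    MvPolynomial.coeff 0 (bosonL m f) = 0 := by
  unfold bosonL
  rw [coeff_add, coeff_add]
  rw [mul_assoc, Finset.sum_mul, coeff_C_mul, coeff_sum]
  have h1 : ∀ i ∈ Finset.Ioo 0 m,
      MvPolynomial.coeff (0 : ℕ →₀ ℕ) (X i * X (m - i) * f) = 0 := by
    intro i _
    rw [mul_assoc]; exact coeff_zero_X_mul _ _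
  rw [Finset.sum_congr rfl h1]
  rw [coeff_sum]
  have h2 : ∀ j ∈ f.vars.filter (fun j => 1 ≤ j),
      MvPolynomial.coeff (0 : ℕ →₀ ℕ) ((j : BosonF) * X (m + j) * pderiv j f) = 0 := by
    intro j _
    rw [show ((j : BosonF) = C (j : BosonR)) by simp, mul_assoc, coeff_C_mul,
      coeff_zero_X_mul, mul_zero]
  rw [Finset.sum_congr rfl h2]
  rw [mul_assoc, coeff_C_mul, coeff_zero_X_mul]
  simp

lemma coeff_single_bosonL (m : ℕ) (f : BosonF) (h0 : MvPolynomial.coeff 0 f = 0)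
    (s : ℕ) (hs : 1 ≤ s) (v : BosonR) (hv : v ≠ 0)
    (hf : ∀ u : ℕ, MvPolynomial.coeff (Finsupp.single u 1) f = if u = s then v else 0)
    (t : ℕ) :
    MvPolynomial.coeff (Finsupp.single t 1) (bosonL m f) =
      if t = m + s then (s : BosonR) * v else 0 := by
  have hsvars : s ∈ f.vars.filter (fun j => 1 ≤ j) := by
    rw [Finset.mem_filter]
    refine ⟨?_, hs⟩
    rw [mem_vars]
    refine ⟨Finsupp.single s 1, ?_, ?_⟩
    · rw [MvPolynomial.mem_support_iff, hf s, if_pos rfl]; exact hv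
    · simp
  unfold bosonL
  rw [coeff_add, coeff_add]
  -- first term is zero
  rw [mul_assoc, Finset.sum_mul, coeff_C_mul, coeff_sum]
  have h1 : ∀ i ∈ Finset.Ioo 0 m,
      MvPolynomial.coeff (Finsupp.single t 1) (X i * X (m - i) * f) = 0 :=
    fun i _ => coeff_single_XX_mul i (m - i) t f
  rw [Finset.sum_congr rfl h1, Finset.sum_const, smul_zero, mul_zero, zero_add]
  -- third term is zero
  have h3 : MvPolynomial.coeff (Finsupp.single t 1)
      (MvPolynomial.C (MvPolynomial.X 0 + ((m : BosonR) - 1) * MvPolynomial.X 1) *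
        MvPolynomial.X m * f) = 0 := by
    rw [mul_assoc, coeff_C_mul, coeff_X_mul']
    split
    · rename_i h
      have hm : t = m := by
        exact (by simpa [Finsupp.mem_support_iff, Finsupp.single_apply] using h : m = t).symm
      subst hm
      simp [h0]
    · rw [mul_zero]
  rw [h3, add_zero]
  -- middle term
  rw [coeff_sum]
  have h2 : ∀ j ∈ f.vars.filter (fun j => 1 ≤ j),
      MvPolynomial.coeff (Finsupp.single t 1) ((j : BosonF) * X (m + j) * pderiv j f) =
        if j = s ∧ t = m + s then (s : BosonR) * v else 0 := by
    intro j hj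
    rw [show ((j : BosonF) = C (j : BosonR)) by simp, mul_assoc, coeff_C_mul, coeff_X_mul']
    split
    · rename_i h
      have hmj : t = m + j := by
        exact (by simpa [Finsupp.mem_support_iff, Finsupp.single_apply] using h : m + j = t).symm
      subst hmj
      rw [show Finsupp.single (m + j) 1 - Finsupp.single (m + j) 1 = 0 by simp,
        coeff_zero_pderiv, hf j]
      by_cases hjs : j = s
      · subst hjs; simp
      · simp [hjs]
    · rename_i h
      have hmj : ¬ (t = m + j) := by
        intro he
        exact h (by simp [he, Finsupp.mem_support_iff])
      rw [mul_zero]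
      by_cases hjs : j = s
      · subst hjs; simp [hmj]
      · simp [hjs]
  rw [Finset.sum_congr rfl h2]
  rw [Finset.sum_eq_single s (fun j _ hjs => by simp [hjs]) (fun hns => absurd hsvars hns)]
  simp

lemma coeff_single_bosonL_one (m : ℕ) (t : ℕ) :
    MvPolynomial.coeff (Finsupp.single t 1) (bosonL m (1 : BosonF)) =
      if t = m then MvPolynomial.X 0 + ((m : BosonR) - 1) * MvPolynomial.X 1 else 0 := by
  unfold bosonL
  rw [coeff_add, coeff_add]
  rw [mul_assoc, Finset.sum_mul, coeff_C_mul, coeff_sum]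
  have h1 : ∀ i ∈ Finset.Ioo 0 m,
      MvPolynomial.coeff (Finsupp.single t 1) (X i * X (m - i) * (1:BosonF)) = 0 :=
    fun i _ => coeff_single_XX_mul i (m - i) t 1
  rw [Finset.sum_congr rfl h1, Finset.sum_const, smul_zero, mul_zero, zero_add]
  rw [show ((1:BosonF).vars.filter (fun j => 1 ≤ j)) = ∅ by simp [vars_one]]
  rw [Finset.sum_empty, MvPolynomial.coeff_zero, zero_add]
  rw [mul_assoc, coeff_C_mul, coeff_X_mul']
  split
  · rename_i h
    have hm : t = m := by
      exact (by simpa [Finsupp.mem_support_iff, Finsupp.single_apply] using h : m = t).symm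
    subst hm
    simp
  · rename_i h
    have hm : ¬ (t = m) := fun he => h (by simp [he, Finsupp.mem_support_iff])
    rw [if_neg hm, mul_zero]

lemma key (l : List ℕ) (hne : l ≠ []) (hpos : ∀ m ∈ l, 1 ≤ m) :
    ∃ q r : ℚ, 0 < q ∧
      (∀ t : ℕ, MvPolynomial.coeff (Finsupp.single t 1) (l.foldr bosonL 1) =
        if t = l.sum then MvPolynomial.C q * MvPolynomial.X 0 +
          MvPolynomial.C r * MvPolynomial.X 1 else 0) := by
  induction l with
  | nil => exact absurd rfl hne
  | cons m l ih =>
    match l, ih with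
    | [], _ =>
      refine ⟨1, (m : ℚ) - 1, one_pos, fun t => ?_⟩
      rw [List.foldr, List.foldr, coeff_single_bosonL_one]
      rw [List.sum_singleton]
      split_ifs
      · simp only [map_sub, map_one, map_natCast]
        ring
      · rfl
    | m2 :: l2, ih =>
      have hne2 : m2 :: l2 ≠ [] := by simp
      have hpos2 : ∀ x ∈ m2 :: l2, 1 ≤ x := fun x hx => hpos x (List.mem_cons_of_mem m hx)
      obtain ⟨q, r, hq, hcoeff⟩ := ih hne2 hpos2
      set f := (m2 :: l2).foldr bosonL 1 with hf
      set s := (m2 :: l2).sum with hsdef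
      have hs : 1 ≤ s := le_trans (hpos2 m2 (by simp)) (by
        rw [hsdef, List.sum_cons]; omega)
      have hv : (MvPolynomial.C q * MvPolynomial.X 0 +
          MvPolynomial.C r * MvPolynomial.X 1 : BosonR) ≠ 0 := by
        intro h
        have := congrArg (MvPolynomial.coeff (Finsupp.single (0 : Fin 2) 1)) h
        rw [coeff_add, coeff_C_mul, coeff_C_mul, coeff_X, coeff_zero] at this
        rw [show (MvPolynomial.coeff (Finsupp.single (0:Fin 2) 1)
          (MvPolynomial.X 1 : BosonR)) = 0 by
            rw [MvPolynomial.coeff_X']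
            rw [if_neg (by simp [Finsupp.single_eq_single_iff])]] at this
        simp at this
        exact hq.ne' this
      have h0 : MvPolynomial.coeff 0 f = 0 := by
        rw [hf, List.foldr]
        exact coeff_zero_bosonL m2 (l2.foldr bosonL 1)
      refine ⟨(s : ℚ) * q, (s : ℚ) * r, by positivity, fun t => ?_⟩
      rw [List.foldr_cons, coeff_single_bosonL m f h0 s hs _ hv hcoeff t]
      rw [List.sum_cons]
      split
      · rename_i h
        simp only [map_mul, map_natCast]
        ring
      · rfl

lemma degOf_linear (q r : ℚ) (hq : q ≠ 0) :
    MvPolynomial.degreeOf 0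
      (MvPolynomial.C q * MvPolynomial.X 0 + MvPolynomial.C r * MvPolynomial.X 1 : BosonR) = 1 := by
  set p : BosonR := MvPolynomial.C q * MvPolynomial.X 0 + MvPolynomial.C r * MvPolynomial.X 1
  have hp : p = MvPolynomial.monomial (Finsupp.single (0:Fin 2) 1) q +
      MvPolynomial.monomial (Finsupp.single (1:Fin 2) 1) r := by
    show MvPolynomial.C q * MvPolynomial.X 0 + MvPolynomial.C r * MvPolynomial.X 1 = _
    rw [C_mul_X_eq_monomial, C_mul_X_eq_monomial]
  have hne : Finsupp.single (1:Fin 2) 1 ≠ Finsupp.single (0:Fin 2) 1 := by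
    intro h
    have := congrArg (fun g : Fin 2 →₀ ℕ => g 0) h
    simp [Finsupp.single_apply] at this
  refine le_antisymm ?_ ?_
  · rw [MvPolynomial.degreeOf_le_iff]
    intro d hd
    rw [MvPolynomial.mem_support_iff, hp, coeff_add, coeff_monomial, coeff_monomial] at hd
    by_cases h1 : Finsupp.single (0:Fin 2) 1 = d
    · subst h1; simp
    · by_cases h2 : Finsupp.single (1:Fin 2) 1 = d
      · subst h2; simp
      · rw [if_neg h1, if_neg h2] at hd
        simp at hd
  · have hmem : Finsupp.single (0:Fin 2) 1 ∈ p.support := by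
      rw [MvPolynomial.mem_support_iff, hp, coeff_add, coeff_monomial, coeff_monomial,
        if_pos rfl, if_neg hne, add_zero]
      exact hq
    have := MvPolynomial.monomial_le_degreeOf 0 hmem
    simpa using this

/-- `v_λ = 𝓛_{−λ₁}(𝓛_{−λ₂}(⋯(𝓛_{−λ_k}(1))⋯))` for a partition `λ₁ ≥ λ₂ ≥ ⋯ ≥ λ_k`. -/
noncomputable def vLam {n : ℕ} (lam : n.Partition) : BosonF :=
  ((lam.parts.sort (· ≤ ·)).reverse).foldr bosonL 1

/-- The coefficient of the monomial `x_n` in `v_λ` has degree exactly one in `A`. -/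
theorem coeff_xn_degree_one_in_A {n : ℕ} (hn : 1 ≤ n) (lam : n.Partition) :
    MvPolynomial.degreeOf 0
      (MvPolynomial.coeff (Finsupp.single n 1) (vLam lam)) = 1 := by
  set l : List ℕ := (lam.parts.sort (· ≤ ·)).reverse with hl
  have hsum : l.sum = n := by
    rw [hl, List.sum_reverse]
    have : ((lam.parts.sort (· ≤ ·) : List ℕ) : Multiset ℕ) = lam.parts :=
      Multiset.sort_eq _ _
    calc (lam.parts.sort (· ≤ ·)).sum
        = ((lam.parts.sort (· ≤ ·) : List ℕ) : Multiset ℕ).sum := (Multiset.sum_coe _).symm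
      _ = lam.parts.sum := by rw [this]
      _ = n := lam.parts_sum
  have hne : l ≠ [] := by
    intro h
    rw [h] at hsum
    simp at hsum
    omega
  have hpos : ∀ m ∈ l, 1 ≤ m := by
    intro m hm
    rw [hl, List.mem_reverse] at hm
    have : m ∈ lam.parts := by
      have := Multiset.mem_sort (α := ℕ) (r := (· ≤ ·)) (s := lam.parts) (a := m)
      exact this.1 hm
    exact lam.parts_pos this
  obtain ⟨q, r, hq, hcoeff⟩ := key l hne hpos
  rw [show vLam lam = l.foldr bosonL 1 from rfl, hcoeff n, hsum, if_pos rfl]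
  exact degOf_linear q r hq.ne'
end

section
/- Let r, s ≥ 1 be integers, let A'_{r,s}(t) := t^{1−2rs}·∏_{(k,l)∈S_{r,s}} (k + l t) ∈ ℂ[t,t⁻¹] with S_{r,s} := {(k,l) ∈ ℤ² : 1−r ≤ k ≤ r, 1−s ≤ l ≤ s} ∖ {(0,0),(r,s)}, and let A ∈ ℂ[t,t⁻¹] be nonzero with maxdeg A ≤ 2r(s−1) and mindeg A ≥ −2(r−1)s. If for every ξ ∈ ℂ∖{0} the multiplicity of ξ as a root of A is at least the multiplicity of ξ as a root of A'_{r,s}, then A = κ·A'_{r,s} for some nonzero constant κ ∈ ℂ. -/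
open LaurentPolynomial

/-- The index set `S_{r,s} = {(k,l) : 1−r ≤ k ≤ r, 1−s ≤ l ≤ s} ∖ {(0,0),(r,s)}`. -/
noncomputable def Srs (r s : ℕ) : Finset (ℤ × ℤ) :=
  (((Finset.Icc (1 - (r : ℤ)) (r : ℤ)) ×ˢ (Finset.Icc (1 - (s : ℤ)) (s : ℤ))).erase
      (0, 0)).erase ((r : ℤ), (s : ℤ))

/-- `A'_{r,s}(t) = t^{1−2rs}·∏_{(k,l)∈S_{r,s}}(k + l t)` (with complex coefficients). -/
noncomputable def Ars (r s : ℕ) : LaurentPolynomial ℂ :=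
  T (1 - 2 * ((r : ℤ) * (s : ℤ))) *
    ∏ p ∈ Srs r s,
      (LaurentPolynomial.C ((p.1 : ℂ)) + LaurentPolynomial.C ((p.2 : ℂ)) * T 1)

/-- The maximum degree of a Laurent polynomial (`⊥` for `0`). -/
noncomputable def maxdeg (a : LaurentPolynomial ℂ) : WithBot ℤ := a.coeff.support.max

/-- The minimum degree of a Laurent polynomial (`⊤` for `0`). -/
noncomputable def mindeg (a : LaurentPolynomial ℂ) : WithTop ℤ := a.coeff.support.min

/-! ### Auxiliary lemmas -/

open Polynomial

section Aux

lemma support_mul_T' (f : LaurentPolynomial ℂ) (n : ℤ) :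
    (f * T n).coeff.support = f.coeff.support.map (addRightEmbedding n) :=
  AddMonoidAlgebra.support_coeff_mul_single f 1 (by simp) n

lemma isCoprime_pow_X' (ξ : ℂ) (hξ : ξ ≠ 0) (m j : ℕ) :
    IsCoprime ((X - Polynomial.C ξ) ^ m) ((X : ℂ[X]) ^ j) := by
  apply IsCoprime.pow
  refine ⟨-Polynomial.C ξ⁻¹, Polynomial.C ξ⁻¹, ?_⟩
  have : (-Polynomial.C ξ⁻¹) * (X - Polynomial.C ξ) + Polynomial.C ξ⁻¹ * X
      = Polynomial.C ξ⁻¹ * Polynomial.C ξ := by ring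
  rw [this, ← Polynomial.C_mul, inv_mul_cancel₀ hξ, Polynomial.C_1]

lemma toLaurent_pow_dvd' {p : ℂ[X]} {f : LaurentPolynomial ℂ} {n : ℕ}
    (h : Polynomial.toLaurent p = f * T (n : ℤ)) {ξ : ℂ} (hξ : ξ ≠ 0) {m : ℕ}
    (hd : (T 1 - LaurentPolynomial.C ξ) ^ m ∣ f) : (X - Polynomial.C ξ) ^ m ∣ p := by
  obtain ⟨g, hg⟩ := hd
  obtain ⟨j, g', hg'⟩ := (g * T (n : ℤ)).exists_T_pow
  have key : Polynomial.toLaurent (p * X ^ j)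
      = Polynomial.toLaurent ((X - Polynomial.C ξ) ^ m * g') := by
    simp only [map_mul, map_pow, map_sub, Polynomial.toLaurent_X,
      Polynomial.toLaurent_C, h, hg, hg', T_pow, mul_one]
    ring
  have key2 := Polynomial.toLaurent_injective key
  exact (isCoprime_pow_X' ξ hξ m j).dvd_of_dvd_mul_right ⟨g', key2⟩

lemma max'_map_embed {α β : Type*} [LinearOrder α] [LinearOrder β] (f : α ↪ β)
    (hf : Monotone f) (s : Finset α) (hs : s.Nonempty) (hs' : (s.map f).Nonempty) :
    (s.map f).max' hs' = f (s.max' hs) := by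
  apply le_antisymm
  · apply Finset.max'_le
    intro y hy
    obtain ⟨x, hx, rfl⟩ := Finset.mem_map.mp hy
    exact hf (Finset.le_max' _ _ hx)
  · exact Finset.le_max' _ _ (Finset.mem_map_of_mem f (s.max'_mem hs))

lemma min'_map_embed {α β : Type*} [LinearOrder α] [LinearOrder β] (f : α ↪ β)
    (hf : Monotone f) (s : Finset α) (hs : s.Nonempty) (hs' : (s.map f).Nonempty) :
    (s.map f).min' hs' = f (s.min' hs) := by
  apply le_antisymm
  · exact Finset.min'_le _ _ (Finset.mem_map_of_mem f (s.min'_mem hs))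
  · apply Finset.le_min'
    intro y hy
    obtain ⟨x, hx, rfl⟩ := Finset.mem_map.mp hy
    exact hf (Finset.min'_le _ _ hx)

lemma max'_congr' {s t : Finset ℤ} (h : s = t) (hs : s.Nonempty) (ht : t.Nonempty) :
    s.max' hs = t.max' ht := by subst h; rfl

lemma min'_congr' {s t : Finset ℤ} (h : s = t) (hs : s.Nonempty) (ht : t.Nonempty) :
    s.min' hs = t.min' ht := by subst h; rfl

lemma A_from_toLaurent' {A : LaurentPolynomial ℂ} {p : ℂ[X]} {n : ℕ}
    (h : Polynomial.toLaurent p = A * T (n : ℤ)) :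
    A = Polynomial.toLaurent p * T (-(n : ℤ)) := by
  rw [h, mul_T_assoc, add_neg_cancel, T_zero, mul_one]

lemma p_ne_zero' {A : LaurentPolynomial ℂ} (hA : A ≠ 0) {p : ℂ[X]} {n : ℕ}
    (h : Polynomial.toLaurent p = A * T (n : ℤ)) : p ≠ 0 := by
  intro hp
  apply hA
  rw [A_from_toLaurent' h, hp, map_zero, zero_mul]

lemma deg_eqs' {A : LaurentPolynomial ℂ} (hA : A ≠ 0) {p : ℂ[X]} {n : ℕ}
    (h : Polynomial.toLaurent p = A * T (n : ℤ))
    (hAne : A.coeff.support.Nonempty) :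
    ((p.natDegree : ℤ)) = A.coeff.support.max' hAne + n ∧
    ((p.natTrailingDegree : ℤ)) = A.coeff.support.min' hAne + n := by
  have hp : p ≠ 0 := p_ne_zero' hA h
  have hsupp : p.support.map (Nat.castEmbedding : ℕ ↪ ℤ)
      = A.coeff.support.map (addRightEmbedding (n : ℤ)) := by
    rw [← LaurentPolynomial.toLaurent_support, h, support_mul_T']
  have hpne : p.support.Nonempty := Polynomial.nonempty_support_iff.mpr hp
  have hpne' : (p.support.map (Nat.castEmbedding : ℕ ↪ ℤ)).Nonempty := hpne.map
  have hAne' : (A.coeff.support.map (addRightEmbedding (n : ℤ))).Nonempty := hAne.map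
  have hmono1 : Monotone ((Nat.castEmbedding : ℕ ↪ ℤ) : ℕ → ℤ) := by
    intro a b hab; simpa using hab
  have hmono2 : Monotone ((addRightEmbedding (n : ℤ) : ℤ ↪ ℤ) : ℤ → ℤ) := by
    intro a b hab; simpa [addRightEmbedding_apply] using hab
  constructor
  · have e1 := max'_map_embed _ hmono1 p.support hpne hpne'
    have e2 := max'_map_embed _ hmono2 A.coeff.support hAne hAne'
    have e3 := max'_congr' hsupp hpne' hAne'
    rw [Polynomial.natDegree_eq_support_max' hp, ← Nat.castEmbedding_apply (R := ℤ), ← e1, e3, e2,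
      addRightEmbedding_apply]
  · have e1 := min'_map_embed _ hmono1 p.support hpne hpne'
    have e2 := min'_map_embed _ hmono2 A.coeff.support hAne hAne'
    have e3 := min'_congr' hsupp hpne' hAne'
    rw [Polynomial.natTrailingDegree_eq_support_min' hp, ← Nat.castEmbedding_apply (R := ℤ),
      ← e1, e3, e2, addRightEmbedding_apply]

variable {r s : ℕ}

lemma card_Srs (hr : 1 ≤ r) (hs : 1 ≤ s) : (Srs r s).card = 2 * r * (2 * s) - 2 := by
  have h1 : ((r : ℤ), (s : ℤ)) ∈
      (((Finset.Icc (1 - (r : ℤ)) (r : ℤ)) ×ˢ (Finset.Icc (1 - (s : ℤ)) (s : ℤ))).erase (0, 0)) := by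
    simp only [Finset.mem_erase, Finset.mem_product, Finset.mem_Icc, Prod.mk.injEq, ne_eq]
    constructor
    · intro h; omega
    · omega
  have h2 : ((0 : ℤ), (0 : ℤ)) ∈
      ((Finset.Icc (1 - (r : ℤ)) (r : ℤ)) ×ˢ (Finset.Icc (1 - (s : ℤ)) (s : ℤ))) := by
    simp only [Finset.mem_product, Finset.mem_Icc]
    omega
  rw [Srs, Finset.card_erase_of_mem h1, Finset.card_erase_of_mem h2, Finset.card_product,
    Int.card_Icc, Int.card_Icc]
  have e1 : ((r : ℤ) + 1 - (1 - r)) = ((2 * r : ℕ) : ℤ) := by push_cast; ring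
  have e2 : ((s : ℤ) + 1 - (1 - s)) = ((2 * s : ℕ) : ℤ) := by push_cast; ring
  rw [e1, e2, Int.toNat_natCast, Int.toNat_natCast]
  omega

lemma filter_snd_Srs (hr : 1 ≤ r) (hs : 1 ≤ s) :
    (Srs r s).filter (fun p => p.2 = 0) =
      ((Finset.Icc (1 - (r : ℤ)) (r : ℤ)).erase 0) ×ˢ {(0 : ℤ)} := by
  ext ⟨k, l⟩
  simp only [Srs, Finset.mem_filter, Finset.mem_erase, Finset.mem_product, Finset.mem_Icc,
    Finset.mem_singleton, Prod.mk.injEq, ne_eq, not_and]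
  constructor
  · rintro ⟨⟨h1, h2, h3⟩, h4⟩
    refine ⟨⟨?_, h3.1.1, h3.1.2⟩, h4⟩
    intro hk; exact (h2 hk) (by omega)
  · rintro ⟨⟨h1, h2, h3⟩, h4⟩
    exact ⟨⟨fun hk => by omega, fun hk => by omega, ⟨⟨h2, h3⟩, by omega⟩⟩, h4⟩

lemma card_filter_snd_Srs (hr : 1 ≤ r) (hs : 1 ≤ s) :
    ((Srs r s).filter (fun p => p.2 = 0)).card = 2 * r - 1 := by
  rw [filter_snd_Srs hr hs, Finset.card_product, Finset.card_singleton, mul_one,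
    Finset.card_erase_of_mem (by simp; omega), Int.card_Icc]
  have e1 : ((r : ℤ) + 1 - (1 - r)) = ((2 * r : ℕ) : ℤ) := by push_cast; ring
  rw [e1, Int.toNat_natCast]

lemma filter_fst_Srs (hr : 1 ≤ r) (hs : 1 ≤ s) :
    (Srs r s).filter (fun p => p.1 = 0) =
      {(0 : ℤ)} ×ˢ ((Finset.Icc (1 - (s : ℤ)) (s : ℤ)).erase 0) := by
  ext ⟨k, l⟩
  simp only [Srs, Finset.mem_filter, Finset.mem_erase, Finset.mem_product, Finset.mem_Icc,
    Finset.mem_singleton, Prod.mk.injEq, ne_eq, not_and]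
  constructor
  · rintro ⟨⟨h1, h2, h3⟩, h4⟩
    refine ⟨h4, ?_, h3.2.1, h3.2.2⟩
    intro hl; exact (h2 (by omega)) (by omega)
  · rintro ⟨h4, h1, h2, h3⟩
    exact ⟨⟨fun hk => by omega, fun hk => by omega, ⟨by omega, ⟨h2, h3⟩⟩⟩, h4⟩

lemma card_filter_fst_Srs (hr : 1 ≤ r) (hs : 1 ≤ s) :
    ((Srs r s).filter (fun p => p.1 = 0)).card = 2 * s - 1 := by
  rw [filter_fst_Srs hr hs, Finset.card_product, Finset.card_singleton, one_mul,
    Finset.card_erase_of_mem (by simp; omega), Int.card_Icc]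
  have e1 : ((s : ℤ) + 1 - (1 - s)) = ((2 * s : ℕ) : ℤ) := by push_cast; ring
  rw [e1, Int.toNat_natCast]

/-- The polynomial incarnation of the product part of `Ars`. -/
noncomputable def Qrs (r s : ℕ) : ℂ[X] :=
  ∏ p ∈ Srs r s, (Polynomial.C ((p.1 : ℂ)) + Polynomial.C ((p.2 : ℂ)) * X)

lemma factor_ne_zero {p : ℤ × ℤ} (hp : p ∈ Srs r s) :
    (Polynomial.C ((p.1 : ℂ)) + Polynomial.C ((p.2 : ℂ)) * X) ≠ 0 := by
  intro h
  have h0 := congrArg (fun q => Polynomial.coeff q 0) h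
  have h1 := congrArg (fun q => Polynomial.coeff q 1) h
  simp only [coeff_add, coeff_C, coeff_C_mul, coeff_X_zero, coeff_X_one, mul_zero, mul_one,
    coeff_zero, if_true, eq_self_iff_true, add_zero, one_ne_zero, if_false, zero_add,
    Int.cast_eq_zero, reduceIte] at h0 h1
  obtain ⟨p1, p2⟩ := p
  simp only [Srs, Finset.mem_erase, ne_eq, Prod.mk.injEq] at hp
  exact hp.2.1 ⟨h0, h1⟩

lemma Ars_eq (r s : ℕ) :
    Ars r s = T (1 - 2 * ((r : ℤ) * (s : ℤ))) * Polynomial.toLaurent (Qrs r s) := by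
  rw [Ars, Qrs, map_prod]
  congr 1
  refine Finset.prod_congr rfl fun p _ => ?_
  rw [map_add, map_mul, Polynomial.toLaurent_C, Polynomial.toLaurent_C, Polynomial.toLaurent_X]

lemma Qrs_ne_zero (r s : ℕ) : Qrs r s ≠ 0 :=
  Finset.prod_ne_zero_iff.mpr fun _ hp => factor_ne_zero hp

lemma natDegree_Qrs (hr : 1 ≤ r) (hs : 1 ≤ s) :
    (Qrs r s).natDegree = 2 * r * (2 * s) - 2 - (2 * r - 1) := by
  rw [Qrs, natDegree_prod _ _ fun _ hp => factor_ne_zero hp]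
  have : ∀ p ∈ Srs r s,
      (Polynomial.C ((p.1 : ℂ)) + Polynomial.C ((p.2 : ℂ)) * X).natDegree
        = if p.2 = 0 then 0 else 1 := by
    intro p _
    by_cases h : p.2 = 0
    · simp [h]
    · rw [if_neg h, add_comm]
      exact natDegree_linear (by exact_mod_cast h)
  rw [Finset.sum_congr rfl this]
  have : ∑ p ∈ Srs r s, (if p.2 = 0 then 0 else 1)
      = ∑ p ∈ Srs r s, (if ¬ p.2 = 0 then 1 else 0) := by
    refine Finset.sum_congr rfl fun p _ => ?_
    by_cases h : p.2 = 0 <;> simp [h]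
  rw [this, Finset.sum_boole]
  have hsplit := Finset.card_filter_add_card_filter_not
    (s := Srs r s) (p := fun p => p.2 = 0)
  rw [card_Srs hr hs] at hsplit
  rw [card_filter_snd_Srs hr hs] at hsplit
  simp only [Nat.cast_id]
  omega

lemma count_zero_roots_Qrs (hr : 1 ≤ r) (hs : 1 ≤ s) :
    (Qrs r s).roots.count 0 = 2 * s - 1 := by
  classical
  rw [Qrs, Polynomial.roots_prod _ _ (by rw [← Qrs]; exact Qrs_ne_zero r s)]
  rw [Multiset.count_bind]
  have key : ∀ p ∈ (Srs r s).val,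
      ((Polynomial.C ((p.1 : ℂ)) + Polynomial.C ((p.2 : ℂ)) * X).roots).count 0
        = if p.1 = 0 then 1 else 0 := by
    intro p hp
    have hp' : p ∈ Srs r s := hp
    by_cases h2 : p.2 = 0
    · have h1 : p.1 ≠ 0 := by
        obtain ⟨p1, p2⟩ := p
        simp only [Srs, Finset.mem_erase, ne_eq, Prod.mk.injEq] at hp'
        intro h; exact hp'.2.1 ⟨h, by simpa [h] using h2⟩
      rw [if_neg h1, h2]
      simp only [Int.cast_zero, Polynomial.C_0, zero_mul, add_zero, Polynomial.roots_C]
      simp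
    · by_cases h1 : p.1 = 0
      · rw [if_pos h1, h1]
        simp only [Int.cast_zero, Polynomial.C_0, zero_add]
        rw [Polynomial.roots_C_mul _ (by exact_mod_cast h2), Polynomial.roots_X]
        simp
      · rw [if_neg h1]
        rw [Multiset.count_eq_zero]
        intro hmem
        rw [Polynomial.mem_roots (factor_ne_zero hp')] at hmem
        have := hmem
        simp only [Polynomial.IsRoot, Polynomial.eval_add, Polynomial.eval_mul,
          Polynomial.eval_C, Polynomial.eval_X, mul_zero, add_zero, Int.cast_eq_zero] at this
        exact h1 this
  rw [Multiset.map_congr rfl key]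
  have : ((Srs r s).val.map fun p => if p.1 = 0 then 1 else 0).sum
      = ∑ p ∈ Srs r s, (if p.1 = 0 then 1 else 0) := rfl
  rw [this, Finset.sum_boole]
  rw [← card_filter_fst_Srs hr hs]
  simp

end Aux

/-- A nonzero Laurent polynomial `A` with `maxdeg A ≤ 2r(s−1)`, `mindeg A ≥ −2(r−1)s`
whose root multiplicities at every `ξ ∈ ℂ∖{0}` dominate those of `A'_{r,s}` is a
nonzero constant multiple of `A'_{r,s}`. -/
theorem eq_Ars_up_to_constant (r s : ℕ) (hr : 1 ≤ r) (hs : 1 ≤ s)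
    (A : LaurentPolynomial ℂ) (hA : A ≠ 0)
    (hmax : maxdeg A ≤ ((2 * (r : ℤ) * ((s : ℤ) - 1) : ℤ) : WithBot ℤ))
    (hmin : ((-(2 * ((r : ℤ) - 1) * (s : ℤ)) : ℤ) : WithTop ℤ) ≤ mindeg A)
    (hdvd : ∀ ξ : ℂ, ξ ≠ 0 → ∀ m : ℕ,
      (T 1 - LaurentPolynomial.C ξ) ^ m ∣ Ars r s →
        (T 1 - LaurentPolynomial.C ξ) ^ m ∣ A) :
    ∃ κ : ℂ, κ ≠ 0 ∧ A = LaurentPolynomial.C κ * Ars r s := by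
  classical
  obtain ⟨n, p, hp⟩ := A.exists_T_pow
  have hpne : p ≠ 0 := p_ne_zero' hA hp
  have hAne : A.coeff.support.Nonempty := Finsupp.support_nonempty_iff.mpr (mt AddMonoidAlgebra.coeff_eq_zero.mp hA)
  obtain ⟨hdeg, htrail⟩ := deg_eqs' hA hp hAne
  set amax := A.coeff.support.max' hAne with hamax
  set amin := A.coeff.support.min' hAne with hamin
  have hmax' : amax ≤ 2 * (r : ℤ) * ((s : ℤ) - 1) := by
    rw [maxdeg, ← Finset.coe_max' hAne] at hmax
    exact_mod_cast hmax
  have hmin' : -(2 * ((r : ℤ) - 1) * (s : ℤ)) ≤ amin := by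
    rw [mindeg, ← Finset.coe_min' hAne] at hmin
    exact_mod_cast hmin
  set Q := Qrs r s with hQdef
  have hQ0 : Q ≠ 0 := Qrs_ne_zero r s
  set M := Q.roots.filter (fun x => ¬ x = 0) with hMdef
  -- multiplicity transfer
  have hcount : ∀ ξ : ℂ, ξ ≠ 0 → Q.roots.count ξ ≤ p.roots.count ξ := by
    intro ξ hξ
    rw [Polynomial.count_roots, Polynomial.count_roots,
      Polynomial.le_rootMultiplicity_iff hpne]
    refine toLaurent_pow_dvd' hp hξ (hdvd ξ hξ _ ?_)
    have h1 : (X - Polynomial.C ξ) ^ (rootMultiplicity ξ Q) ∣ Q :=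
      Polynomial.pow_rootMultiplicity_dvd Q ξ
    have h2 : (T 1 - LaurentPolynomial.C ξ) ^ (rootMultiplicity ξ Q)
        = Polynomial.toLaurent ((X - Polynomial.C ξ) ^ (rootMultiplicity ξ Q)) := by
      simp only [map_pow, map_sub, Polynomial.toLaurent_X, Polynomial.toLaurent_C]
    rw [Ars_eq, h2]
    exact dvd_mul_of_dvd_right (map_dvd _ h1) _
  have hMle : M ≤ p.roots := by
    rw [Multiset.le_iff_count]
    intro ξ
    by_cases h : ξ = 0
    · simp [hMdef, Multiset.count_filter, h]
    · rw [hMdef, Multiset.count_filter, if_pos h]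
      exact hcount ξ h
  set R := (M.map fun a => X - Polynomial.C a).prod with hRdef
  have hRdvd : R ∣ p :=
    dvd_trans (Multiset.prod_dvd_prod_of_le (Multiset.map_le_map hMle))
      (prod_multiset_X_sub_C_dvd p)
  obtain ⟨q, hq⟩ := hRdvd
  have hRmonic : R.Monic := monic_multiset_prod_of_monic _ _ fun a _ => monic_X_sub_C a
  have hR0 : R ≠ 0 := hRmonic.ne_zero
  have hq0 : q ≠ 0 := by rintro rfl; rw [mul_zero] at hq; exact hpne hq
  have hdegR : R.natDegree = Multiset.card M :=
    natDegree_multiset_prod_X_sub_C_eq_card M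
  have hM0 : ∀ x ∈ M, x ≠ 0 := fun x hx => (Multiset.mem_filter.mp hx).2
  have htrailR : R.natTrailingDegree = 0 := by
    rw [Polynomial.natTrailingDegree_eq_zero]
    right
    rw [Polynomial.coeff_zero_eq_eval_zero, hRdef, Polynomial.eval_multiset_prod]
    apply Multiset.prod_ne_zero
    intro h0
    obtain ⟨f, hf, hev⟩ := Multiset.mem_map.mp h0
    obtain ⟨a, ha, rfl⟩ := Multiset.mem_map.mp hf
    simp only [Polynomial.eval_sub, Polynomial.eval_X, Polynomial.eval_C, zero_sub,
      neg_eq_zero] at hev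
    exact hM0 a ha hev
  -- counting
  have hz : Q.roots.count 0 = 2 * s - 1 := count_zero_roots_Qrs hr hs
  have hcardroots : Multiset.card Q.roots = Q.natDegree :=
    Polynomial.splits_iff_card_roots.mp (IsAlgClosed.splits Q)
  have hfe : Q.roots.filter (fun x => x = 0) = Multiset.replicate (Q.roots.count 0) 0 := by
    simpa using Multiset.filter_eq' Q.roots 0
  have hsplitM : Q.roots.filter (fun x => x = 0) + M = Q.roots :=
    Multiset.filter_add_not _ _
  have hMcard : Multiset.card M + (2 * s - 1) = Q.natDegree := by
    have := congrArg Multiset.card hsplitM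
    rw [Multiset.card_add, hfe, Multiset.card_replicate, hz, hcardroots] at this
    omega
  have hQdeg : Q.natDegree = 2 * r * (2 * s) - 2 - (2 * r - 1) := natDegree_Qrs hr hs
  -- integer bookkeeping
  have hkc : ((r : ℤ)) * ((s : ℤ)) = ((r * s : ℕ) : ℤ) := by push_cast; ring
  have hrw : 2 * r * (2 * s) = 4 * (r * s) := by ring
  rw [hrw] at hQdeg
  -- degrees of p
  have hpdeg : p.natDegree = R.natDegree + q.natDegree := by
    rw [hq, natDegree_mul hR0 hq0]
  have hptrail : p.natTrailingDegree = q.natTrailingDegree := by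
    rw [hq, natTrailingDegree_mul hR0 hq0, htrailR, zero_add]
  have hqtd : q.natTrailingDegree ≤ q.natDegree := natTrailingDegree_le_natDegree q
  have hmax'' : amax ≤ 2 * ((r * s : ℕ) : ℤ) - 2 * r := by
    have : 2 * (r : ℤ) * ((s : ℤ) - 1) = 2 * ((r : ℤ) * (s : ℤ)) - 2 * r := by ring
    rw [this, hkc] at hmax'
    exact hmax'
  have hmin'' : 2 * (s : ℤ) - 2 * ((r * s : ℕ) : ℤ) ≤ amin := by
    have : -(2 * ((r : ℤ) - 1) * (s : ℤ)) = 2 * (s : ℤ) - 2 * ((r : ℤ) * (s : ℤ)) := by ring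
    rw [this, hkc] at hmin'
    exact hmin'
  -- conclude the two degrees of q agree and compute them
  have hjn : (q.natDegree : ℤ) = (n : ℤ) + 2 * (s : ℤ) - 2 * ((r * s : ℕ) : ℤ) ∧
      q.natTrailingDegree = q.natDegree := by
    constructor
    · omega
    · omega
  obtain ⟨hjval, hjeq⟩ := hjn
  -- q is a monomial
  set c := q.leadingCoeff with hcdef
  have hc : c ≠ 0 := Polynomial.leadingCoeff_ne_zero.mpr hq0
  obtain ⟨j, hjdef⟩ : ∃ j, q.natDegree = j := ⟨_, rfl⟩
  rw [hjdef] at hjval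
  have hq' : q = Polynomial.C c * X ^ j := by
    ext i
    rw [Polynomial.coeff_C_mul, Polynomial.coeff_X_pow]
    by_cases hij : i = j
    · subst hij
      rw [if_pos rfl, mul_one, hcdef, Polynomial.leadingCoeff, hjdef]
    · rw [if_neg hij, mul_zero]
      rcases lt_or_gt_of_ne hij with hlt | hgt
      · exact Polynomial.coeff_eq_zero_of_lt_natTrailingDegree (by omega)
      · exact Polynomial.coeff_eq_zero_of_natDegree_lt (by omega)
  -- factor Q
  set lc := Q.leadingCoeff with hlcdef
  have hlc : lc ≠ 0 := Polynomial.leadingCoeff_ne_zero.mpr hQ0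
  have hQfact : Q = Polynomial.C lc * (X ^ (2 * s - 1) * R) := by
    have h1 : Q = Polynomial.C lc * (Q.roots.map fun a => X - Polynomial.C a).prod :=
      (IsAlgClosed.splits Q).eq_prod_roots.trans rfl
    rw [h1]
    congr 1
    rw [← hsplitM, Multiset.map_add, Multiset.prod_add, hfe, hz]
    congr 1
    rw [Multiset.map_replicate, Multiset.prod_replicate]
    simp
  -- assemble
  have hA_eq : A = LaurentPolynomial.C c * (T ((j : ℤ) - (n : ℤ))
      * Polynomial.toLaurent R) := by
    rw [A_from_toLaurent' hp]
    simp only [hq, hq', map_mul, Polynomial.toLaurent_C, Polynomial.toLaurent_X_pow]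
    rw [show ((j : ℤ) - (n : ℤ)) = (j : ℤ) + -(n : ℤ) by ring, T_add]
    ring
  have hArs_eq : Ars r s = LaurentPolynomial.C lc *
      (T ((1 - 2 * ((r : ℤ) * (s : ℤ))) + ((2 * s - 1 : ℕ) : ℤ)) * Polynomial.toLaurent R) := by
    rw [Ars_eq, ← hQdef, hQfact]
    simp only [map_mul, Polynomial.toLaurent_C, Polynomial.toLaurent_X_pow]
    rw [T_add]
    ring
  have hexp : (j : ℤ) - (n : ℤ)
      = (1 - 2 * ((r : ℤ) * (s : ℤ))) + ((2 * s - 1 : ℕ) : ℤ) := by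
    rw [hkc]
    omega
  refine ⟨c * lc⁻¹, mul_ne_zero hc (inv_ne_zero hlc), ?_⟩
  rw [hA_eq, hArs_eq, hexp, ← mul_assoc (LaurentPolynomial.C (c * lc⁻¹)), ← map_mul]
  congr 2
  field_simp
end

section
/- For every integer s ≥ 1, the following identity holds in ℚ[t,t⁻¹]: 2·t^{1−2s}·∏_{(k,l)∈S_{1,s}} (k + l t) = 2·s!·(s−1)!·∏_{k=1}^{s−1} (k²t² − 1), where S_{1,s} := {(k,l) ∈ ℤ² : 0 ≤ k ≤ 1, 1−s ≤ l ≤ s} ∖ {(0,0),(1,s)}. In other words, R_{1,s}(t) = 2·s!·(s−1)!·∏_{k=1}^{s−1}(k²t²−1). -/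
open LaurentPolynomial
section Helpers
open Finset

lemma prodIccInt (n : ℕ) : ∏ l ∈ Finset.Icc (1:ℤ) (n:ℤ), l = (n.factorial : ℤ) := by
  induction n with
  | zero => simp
  | succ n ih =>
    have h : Finset.Icc (1:ℤ) ((n+1:ℕ):ℤ) = insert ((n:ℤ)+1) (Finset.Icc (1:ℤ) (n:ℤ)) := by
      ext x; simp; push_cast; omega
    rw [h, Finset.prod_insert (by simp), ih, Nat.factorial_succ]
    push_cast; ring

lemma prodIccNegInt (n : ℕ) : ∏ l ∈ Finset.Icc (-(n:ℤ)) (-1), l = (-1)^n * (n.factorial : ℤ) := by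
  have h : Finset.Icc (-(n:ℤ)) (-1) = (Finset.Icc (1:ℤ) n).image Neg.neg := by
    ext x
    simp only [Finset.mem_Icc, Finset.mem_image]
    constructor
    · intro hx; exact ⟨-x, by omega, by ring⟩
    · rintro ⟨a, ha, rfl⟩; omega
  rw [h, Finset.prod_image (by intro a _ b _ hab; omega)]
  have : ∀ l ∈ Finset.Icc (1:ℤ) (n:ℤ), -l = (-1) * l := by intro l _; ring
  rw [Finset.prod_congr rfl this, Finset.prod_mul_distrib, Finset.prod_const, prodIccInt]
  congr 1
  simp [Int.card_Icc]

lemma symProd (m : ℕ) :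
    ∏ l ∈ Finset.Icc (-(m:ℤ)) (m:ℤ), (1 + LaurentPolynomial.C ((l:ℚ)) * T 1)
      = ∏ k ∈ Finset.Icc (1:ℕ) m, (1 - LaurentPolynomial.C ((k:ℚ)^2) * T 2) := by
  induction m with
  | zero => simp
  | succ m ih =>
    have h1 : Finset.Icc (-((m+1:ℕ):ℤ)) ((m+1:ℕ):ℤ)
        = insert (-((m:ℤ)+1)) (insert ((m:ℤ)+1) (Finset.Icc (-(m:ℤ)) (m:ℤ))) := by
      ext x; simp; push_cast; omega
    have h2 : Finset.Icc 1 (m+1) = insert (m+1) (Finset.Icc 1 m) := by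
      ext x; simp; omega
    rw [h1, h2, Finset.prod_insert (by simp <;> omega), Finset.prod_insert (by simp <;> omega),
      Finset.prod_insert (by simp), ih]
    set P := ∏ k ∈ Finset.Icc (1:ℕ) m, (1 - LaurentPolynomial.C ((k:ℚ)^2) * T 2) with hP
    rw [show (2:ℤ) = 1 + 1 from rfl, T_add]
    push_cast
    simp only [map_neg, map_add, map_one, map_pow, map_mul]
    ring
end Helpers

/-- `R_{1,s}(t) = 2·t^{1−2s}·∏_{(k,l)∈S_{1,s}}(k + l t) = 2·s!·(s−1)!·∏_{k=1}^{s−1}(k²t²−1)`. -/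
theorem R_one_s_eq (s : ℕ) (hs : 1 ≤ s) :
    2 * T (1 - 2 * (s : ℤ)) *
        ∏ p ∈ Srs 1 s,
          (LaurentPolynomial.C ((p.1 : ℚ)) + LaurentPolynomial.C ((p.2 : ℚ)) * T 1)
      = LaurentPolynomial.C ((2 * s.factorial * (s - 1).factorial : ℕ) : ℚ) *
          ∏ k ∈ Finset.Icc 1 (s - 1),
            (LaurentPolynomial.C ((k : ℚ) ^ 2) * T 2 - 1) := by
  obtain ⟨m, rfl⟩ : ∃ m, s = m + 1 := ⟨s - 1, by omega⟩
  have hS : Srs 1 (m+1) =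
      (({(0:ℤ)} : Finset ℤ) ×ˢ ((Finset.Icc (-(m:ℤ)) ((m:ℤ)+1)).erase 0)) ∪
      (({(1:ℤ)} : Finset ℤ) ×ˢ (Finset.Icc (-(m:ℤ)) (m:ℤ))) := by
    ext ⟨k, l⟩
    simp only [Srs, Finset.mem_erase, Finset.mem_product, Finset.mem_Icc, Finset.mem_union,
      Finset.mem_singleton, Prod.mk.injEq, ne_eq, not_and]
    push_cast
    constructor
    · rintro ⟨h1, h2, ⟨hk, hl⟩⟩; omega
    · rintro (⟨rfl, h⟩ | ⟨rfl, h⟩) <;> simp at h ⊢ <;> omega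
  have hdis : Disjoint (({(0:ℤ)} : Finset ℤ) ×ˢ ((Finset.Icc (-(m:ℤ)) ((m:ℤ)+1)).erase 0))
      (({(1:ℤ)} : Finset ℤ) ×ˢ (Finset.Icc (-(m:ℤ)) (m:ℤ))) := by
    rw [Finset.disjoint_left]
    rintro ⟨k, l⟩ h1 h2
    simp at h1 h2
    omega
  rw [hS, Finset.prod_union hdis, Finset.prod_product, Finset.prod_product,
    Finset.prod_singleton, Finset.prod_singleton]
  simp only [Int.cast_zero, Int.cast_one, map_zero, map_one, zero_add]
  -- split the erased interval
  have hsplit : (Finset.Icc (-(m:ℤ)) ((m:ℤ)+1)).erase 0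
      = Finset.Icc (-(m:ℤ)) (-1) ∪ Finset.Icc (1:ℤ) ((m:ℤ)+1) := by
    ext x; simp; omega
  have hdis2 : Disjoint (Finset.Icc (-(m:ℤ)) (-1)) (Finset.Icc (1:ℤ) ((m:ℤ)+1)) := by
    rw [Finset.disjoint_left]; intro x h1 h2; simp at h1 h2; omega
  have hP0 : ∏ l ∈ (Finset.Icc (-(m:ℤ)) ((m:ℤ)+1)).erase 0,
      (LaurentPolynomial.C ((l:ℚ)) * T 1)
      = LaurentPolynomial.C (((-1:ℚ))^m * (m.factorial : ℚ) * ((m+1).factorial : ℚ))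
        * T (2*(m:ℤ)+1) := by
    rw [Finset.prod_mul_distrib, Finset.prod_const]
    have hc : ∏ l ∈ (Finset.Icc (-(m:ℤ)) ((m:ℤ)+1)).erase 0, ((l:ℚ))
        = ((-1:ℚ))^m * (m.factorial : ℚ) * ((m+1).factorial : ℚ) := by
      have : ∏ l ∈ (Finset.Icc (-(m:ℤ)) ((m:ℤ)+1)).erase 0, ((l:ℚ))
          = (((∏ l ∈ (Finset.Icc (-(m:ℤ)) ((m:ℤ)+1)).erase 0, l : ℤ)) : ℚ) := by
        push_cast; rfl
      rw [this, hsplit, Finset.prod_union hdis2, prodIccNegInt,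
        show ((m:ℤ)+1) = ((m+1:ℕ):ℤ) by push_cast; ring, prodIccInt]
      push_cast; ring
    have hcard : ((Finset.Icc (-(m:ℤ)) ((m:ℤ)+1)).erase 0).card = 2*m+1 := by
      rw [hsplit, Finset.card_union_of_disjoint hdis2]
      simp [Int.card_Icc]
      omega
    rw [← map_prod, hc, hcard, T_pow]
    norm_num
  rw [hP0, symProd]
  -- flip the sign in each factor of the right product
  have hflip : ∀ k ∈ Finset.Icc (1:ℕ) m,
      (1 - LaurentPolynomial.C ((k:ℚ)^2) * T 2)
        = (-1) * (LaurentPolynomial.C ((k:ℚ)^2) * T 2 - 1) := by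
    intro k _; ring
  rw [Finset.prod_congr rfl hflip, Finset.prod_mul_distrib, Finset.prod_const, Nat.card_Icc]
  simp only [Nat.add_sub_cancel]
  have hT : (T (1 - 2 * ((m+1:ℕ):ℤ)) : ℚ[T;T⁻¹]) * T (2*(m:ℤ)+1) = 1 := by
    rw [← T_add, show (1 - 2 * ((m+1:ℕ):ℤ)) + (2*(m:ℤ)+1) = 0 by push_cast; ring, T_zero]
  have hneg : ((-1 : ℚ[T;T⁻¹]))^m = LaurentPolynomial.C ((-1:ℚ)^m) := by
    rw [map_pow, map_neg, map_one]
  have h2C : (2 : ℚ[T;T⁻¹]) = LaurentPolynomial.C 2 := by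
    rw [show (2:ℚ) = ((2:ℕ):ℚ) by norm_num, map_natCast]; norm_cast
  set Q := ∏ k ∈ Finset.Icc (1:ℕ) m, (LaurentPolynomial.C ((k:ℚ)^2) * T 2 - 1) with hQ
  rw [hneg, h2C]
  have key : LaurentPolynomial.C (2:ℚ) * T (1 - 2 * ((m+1:ℕ):ℤ)) *
      (LaurentPolynomial.C ((-1:ℚ)^m * (m.factorial : ℚ) * ((m+1).factorial : ℚ)) *
        T (2*(m:ℤ)+1) * (LaurentPolynomial.C ((-1:ℚ)^m) * Q))
      = (LaurentPolynomial.C (2:ℚ) *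
          LaurentPolynomial.C ((-1:ℚ)^m * (m.factorial : ℚ) * ((m+1).factorial : ℚ)) *
          LaurentPolynomial.C ((-1:ℚ)^m)) *
        (T (1 - 2 * ((m+1:ℕ):ℤ)) * T (2*(m:ℤ)+1)) * Q := by ring
  rw [key, hT, mul_one, ← map_mul, ← map_mul]
  have h2 : ((-1:ℚ)^m) * ((-1:ℚ)^m) = 1 := by
    rw [← pow_add]; exact Even.neg_one_pow ⟨m, rfl⟩
  have hsc : (2:ℚ) * ((-1:ℚ)^m * (m.factorial : ℚ) * ((m+1).factorial : ℚ)) * ((-1:ℚ)^m)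
      = ((2 * (m+1).factorial * m.factorial : ℕ) : ℚ) := by
    push_cast
    linear_combination (2 * (m.factorial : ℚ) * ((m+1).factorial : ℚ)) * h2
  rw [hsc]
end

section
/- Let t₀ be a nonzero complex number, V a complex vector space carrying a Virasoro family L with central charge c(t₀), and v a highest-weight vector of weight h_{2,2}(t₀). Then the vector w := L(−1)⁴ v − 2(t₀ + t₀⁻¹)·L(−2)(L(−1)² v) + (t₀² − 2 + t₀⁻²)·L(−2)² v − 2(t₀ − 3 + t₀⁻¹)·L(−3)(L(−1) v) − 3(t₀ − 2 + t₀⁻¹)·L(−4) v satisfies L(m) w = 0 for every integer m ≥ 1. (That is, P_{2,2}(t) = L_{−1}⁴ − 2(t+t⁻¹)L_{−2}L_{−1}² + (t²−2+t⁻²)L_{−2}² − 2(t−3+t⁻¹)L_{−3}L_{−1} − 3(t−2+t⁻¹)L_{−4} produces the level-4 singular vector at the highest weight (c(t), h_{2,2}(t)).) -/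
set_option maxHeartbeats 1000000 in
/-- `P_{2,2}(t) = L_{−1}⁴ − 2(t+t⁻¹)L_{−2}L_{−1}² + (t²−2+t⁻²)L_{−2}²
− 2(t−3+t⁻¹)L_{−3}L_{−1} − 3(t−2+t⁻¹)L_{−4}` produces the level-4 singular vector
at the highest weight `(c(t), h_{2,2}(t))`. -/
theorem P22_singular_vector {V : Type*} [AddCommGroup V] [Module ℂ V]
    (t₀ : ℂ) (ht₀ : t₀ ≠ 0) (L : ℤ → Module.End ℂ V)
    (hL : VirasoroFamily (13 - 6 * (t₀ + t₀⁻¹)) L)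
    (v : V)
    (hv : IsHighestWeightVector L
      ((((2 : ℂ) - 2 * t₀) ^ 2 - (t₀ - 1) ^ 2) / (4 * t₀)) v) :
    ∀ m : ℤ, 1 ≤ m →
      L m (((L (-1)) ^ 4) v
        - (2 * (t₀ + t₀⁻¹)) • (L (-2)) (((L (-1)) ^ 2) v)
        + (t₀ ^ 2 - 2 + (t₀ ^ 2)⁻¹) • ((L (-2)) ^ 2) v
        - (2 * (t₀ - 3 + t₀⁻¹)) • (L (-3)) ((L (-1)) v)
        - (3 * (t₀ - 2 + t₀⁻¹)) • (L (-4)) v) = 0 := by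
  obtain ⟨hv1, hv0⟩ := hv
  set s : ℂ := t₀ + t₀⁻¹ with hs
  set C : ℂ := 13 - 6 * s with hC
  set h : ℂ := (((2 : ℂ) - 2 * t₀) ^ 2 - (t₀ - 1) ^ 2) / (4 * t₀) with hh
  clear_value C h
  have g1 : t₀ - 3 + t₀⁻¹ = s - 3 := by rw [hs]; ring
  have g2 : t₀ - 2 + t₀⁻¹ = s - 2 := by rw [hs]; ring
  have g3 : t₀ ^ 2 - 2 + (t₀ ^ 2)⁻¹ = s ^ 2 - 4 := by
    rw [hs]; field_simp; ring
  have g4 : h = 3 / 4 * s - 3 / 2 := by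
    rw [hh, hs]; field_simp; ring
  have comm : ∀ (m n : ℤ) (u : V),
      L m (L n u) = L n (L m u) + ((m : ℂ) - (n : ℂ)) • L (m + n) u
        + (if m + n = 0 then C / 12 * (m : ℂ) * ((m : ℂ) ^ 2 - 1) else 0) • u := by
    intro m n u
    have h1 := LinearMap.congr_fun (hL m n) u
    simp only [LinearMap.sub_apply, Module.End.mul_apply, LinearMap.add_apply,
      LinearMap.smul_apply, Module.End.one_apply] at h1
    rw [sub_eq_iff_eq_add] at h1
    rw [h1]; abel
  have c0m1 : ∀ u : V, L 0 (L (-1) u) = L (-1) (L 0 u) + L (-1) u := by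
    intro u
    have t := comm 0 (-1) u
    norm_num at t
    rw [t]
    try module
  have c0m2 : ∀ u : V, L 0 (L (-2) u) = L (-2) (L 0 u) + (2 : ℂ) • L (-2) u := by
    intro u
    have t := comm 0 (-2) u
    norm_num at t
    rw [t]
    try module
  have c1m1 : ∀ u : V, L 1 (L (-1) u) = L (-1) (L 1 u) + (2 : ℂ) • L 0 u := by
    intro u
    have t := comm 1 (-1) u
    norm_num at t
    rw [t]
    try module
  have c1m2 : ∀ u : V, L 1 (L (-2) u) = L (-2) (L 1 u) + (3 : ℂ) • L (-1) u := by
    intro u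
    have t := comm 1 (-2) u
    norm_num at t
    rw [t]
    try module
  have c1m3 : ∀ u : V, L 1 (L (-3) u) = L (-3) (L 1 u) + (4 : ℂ) • L (-2) u := by
    intro u
    have t := comm 1 (-3) u
    norm_num at t
    rw [t]
    try module
  have c1m4 : ∀ u : V, L 1 (L (-4) u) = L (-4) (L 1 u) + (5 : ℂ) • L (-3) u := by
    intro u
    have t := comm 1 (-4) u
    norm_num at t
    rw [t]
    try module
  have c2m1 : ∀ u : V, L 2 (L (-1) u) = L (-1) (L 2 u) + (3 : ℂ) • L 1 u := by
    intro u
    have t := comm 2 (-1) u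
    norm_num at t
    rw [t]
    try module
  have c2m2 : ∀ u : V, L 2 (L (-2) u) = L (-2) (L 2 u) + (4 : ℂ) • L 0 u + (C / 2) • u := by
    intro u
    have t := comm 2 (-2) u
    norm_num at t
    rw [t]
    try module
  have c2m3 : ∀ u : V, L 2 (L (-3) u) = L (-3) (L 2 u) + (5 : ℂ) • L (-1) u := by
    intro u
    have t := comm 2 (-3) u
    norm_num at t
    rw [t]
    try module
  have c2m4 : ∀ u : V, L 2 (L (-4) u) = L (-4) (L 2 u) + (6 : ℂ) • L (-2) u := by
    intro u
    have t := comm 2 (-4) u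
    norm_num at t
    rw [t]
    try module
  have cm1m2 : L (-1) (L (-2) v) = L (-2) (L (-1) v) + L (-3) v := by
    have t := comm (-1) (-2) v
    norm_num at t
    rw [t]
    try module
  have Lv1 : L 1 v = 0 := hv1 1 le_rfl
  have Lv2 : L 2 v = 0 := hv1 2 (by norm_num)
  have l0x1 : L 0 (L (-1) v) = (h + 1) • L (-1) v := by
    rw [c0m1, hv0, map_smul]
    try module
  have l0x11 : L 0 (L (-1) (L (-1) v)) = (h + 2) • L (-1) (L (-1) v) := by
    rw [c0m1, l0x1, map_smul]
    try module
  have l0x111 : L 0 (L (-1) (L (-1) (L (-1) v)))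
      = (h + 3) • L (-1) (L (-1) (L (-1) v)) := by
    rw [c0m1, l0x11, map_smul]
    try module
  have l0x2 : L 0 (L (-2) v) = (h + 2) • L (-2) v := by
    rw [c0m2, hv0, map_smul]
    try module
  have a1 : L 1 (L (-1) v) = (2 * h) • v := by
    rw [c1m1, Lv1, map_zero, hv0]
    try module
  have a2 : L 1 (L (-1) (L (-1) v)) = (4 * h + 2) • L (-1) v := by
    rw [c1m1, a1, map_smul, l0x1]
    try module
  have a3 : L 1 (L (-1) (L (-1) (L (-1) v))) = (6 * h + 6) • L (-1) (L (-1) v) := by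
    rw [c1m1, a2, map_smul, l0x11]
    try module
  have a4 : L 1 (L (-1) (L (-1) (L (-1) (L (-1) v))))
      = (8 * h + 12) • L (-1) (L (-1) (L (-1) v)) := by
    rw [c1m1, a3, map_smul, l0x111]
    try module
  have b1 : L 1 (L (-2) v) = (3 : ℂ) • L (-1) v := by
    rw [c1m2, Lv1, map_zero]
    try module
  have T2 : L 1 (L (-2) (L (-1) (L (-1) v)))
      = (4 * h + 2) • L (-2) (L (-1) v) + (3 : ℂ) • L (-1) (L (-1) (L (-1) v)) := by
    rw [c1m2, a2, map_smul]
    try module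
  have T3 : L 1 (L (-2) (L (-2) v))
      = (6 : ℂ) • L (-2) (L (-1) v) + (3 : ℂ) • L (-3) v := by
    rw [c1m2, b1, map_smul, cm1m2]
    try module
  have T4 : L 1 (L (-3) (L (-1) v))
      = (2 * h) • L (-3) v + (4 : ℂ) • L (-2) (L (-1) v) := by
    rw [c1m3, a1, map_smul]
    try module
  have T5 : L 1 (L (-4) v) = (5 : ℂ) • L (-3) v := by
    rw [c1m4, Lv1, map_zero]
    try module
  have d1 : L 2 (L (-1) v) = 0 := by
    rw [c2m1, Lv2, map_zero, Lv1]
    try module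
  have d2 : L 2 (L (-1) (L (-1) v)) = (6 * h) • v := by
    rw [c2m1, d1, map_zero, a1]
    try module
  have d3 : L 2 (L (-1) (L (-1) (L (-1) v))) = (18 * h + 6) • L (-1) v := by
    rw [c2m1, d2, map_smul, a2]
    try module
  have d4 : L 2 (L (-1) (L (-1) (L (-1) (L (-1) v))))
      = (36 * h + 24) • L (-1) (L (-1) v) := by
    rw [c2m1, d3, map_smul, a3]
    try module
  have e1 : L 2 (L (-2) v) = (4 * h + C / 2) • v := by
    rw [c2m2, Lv2, map_zero, hv0]
    try module
  have U2 : L 2 (L (-2) (L (-1) (L (-1) v)))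
      = (6 * h) • L (-2) v + (4 * (h + 2) + C / 2) • L (-1) (L (-1) v) := by
    rw [c2m2, d2, map_smul, l0x11]
    try module
  have U3 : L 2 (L (-2) (L (-2) v)) = (8 * h + 8 + C) • L (-2) v := by
    rw [c2m2, e1, map_smul, l0x2]
    try module
  have U4 : L 2 (L (-3) (L (-1) v)) = (5 : ℂ) • L (-1) (L (-1) v) := by
    rw [c2m3, d1, map_zero]
    try module
  have U5 : L 2 (L (-4) v) = (6 : ℂ) • L (-2) v := by
    rw [c2m4, Lv2, map_zero]
    try module
  have pow4 : ((L (-1)) ^ 4) v = L (-1) (L (-1) (L (-1) (L (-1) v))) := by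
    rw [show (L (-1)) ^ 4 = (L (-1)) ^ 2 * (L (-1)) ^ 2 by rw [← pow_add]]
    simp only [pow_two, Module.End.mul_apply]
  have pow2 : ((L (-1)) ^ 2) v = L (-1) (L (-1) v) := by
    rw [pow_two, Module.End.mul_apply]
  have pow22 : ((L (-2)) ^ 2) v = L (-2) (L (-2) v) := by
    rw [pow_two, Module.End.mul_apply]
  set W := ((L (-1)) ^ 4) v
        - (2 * (t₀ + t₀⁻¹)) • (L (-2)) (((L (-1)) ^ 2) v)
        + (t₀ ^ 2 - 2 + (t₀ ^ 2)⁻¹) • ((L (-2)) ^ 2) v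
        - (2 * (t₀ - 3 + t₀⁻¹)) • (L (-3)) ((L (-1)) v)
        - (3 * (t₀ - 2 + t₀⁻¹)) • (L (-4)) v with hW
  clear_value W
  have hw1 : L 1 W = 0 := by
    rw [hW, pow4, pow2, pow22]
    simp only [map_sub, map_add, map_smul]
    rw [a4, T2, T3, T4, T5]
    match_scalars <;> (try simp only [g1, g2, g3, g4, hC]) <;> ring
  have hw2 : L 2 W = 0 := by
    rw [hW, pow4, pow2, pow22]
    simp only [map_sub, map_add, map_smul]
    rw [d4, U2, U3, U4, U5]
    match_scalars <;> (try simp only [g1, g2, g3, g4, hC]) <;> ring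
  have key : ∀ m : ℤ, 2 ≤ m → L m W = 0 := by
    refine fun m hm => Int.le_induction (motive := fun k _ => L k W = 0) hw2 ?_ m hm
    intro n hn ih
    have h0 := comm n 1 W
    rw [hw1, map_zero, ih, map_zero, if_neg (by omega : ¬ (n + 1 = 0))] at h0
    have h2 : ((n : ℂ) - 1) • L (n + 1) W = 0 := by
      have := h0.symm
      simpa using this
    have hne : ((n : ℂ) - 1) ≠ 0 := by
      have hne' : (n : ℂ) ≠ 1 := by
        exact_mod_cast (by omega : n ≠ 1)
      exact sub_ne_zero.mpr hne'
    exact (smul_eq_zero.mp h2).resolve_left hne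
  intro m hm
  rcases eq_or_lt_of_le hm with heq | hlt
  · exact heq ▸ hw1
  · exact key m (by omega)
end
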